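/- The fOU correlation function C_Z(s) = (1/Γ(2H+1))[(1/2)∫_ℝ e^{−|v|}|s+v|^{2H} dv − s^{2H}] satisfies, for H ∈ (0,1/2), the small-lag expansion C_Z(s) = 1 − s^{2H}/Γ(2H+1) + o(s^{2H}) as s → 0⁺. -/

import Mathlib

open MeasureTheory Real Filter Asymptotics

/-- Correlation function of the stationary fractional Ornstein-Uhlenbeck process. -/
noncomputable def fouCorr (H : ℝ) (s : ℝ) : ℝ :=
  (Real.Gamma (2 * H + 1))⁻¹
    * ((1 / 2) * (∫ v : ℝ, Real.exp (-|v|) * |s + v| ^ (2 * H)) - s ^ (2 * H))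

lemma fou_abs_exp_sub_exp_le (a b : ℝ) :
    |Real.exp a - Real.exp b| ≤ |a - b| * Real.exp (max a b) := by
  wlog h : b ≤ a generalizing a b
  · have := this b a (le_of_not_ge h)
    rwa [abs_sub_comm, abs_sub_comm b a, max_comm] at this
  rw [abs_of_nonneg (sub_nonneg.2 (Real.exp_le_exp.2 h)), abs_of_nonneg (sub_nonneg.2 h),
    max_eq_left h]
  have hb : Real.exp b = Real.exp a * Real.exp (b - a) := by
    rw [← Real.exp_add]; ring_nf
  nlinarith [Real.add_one_le_exp (b - a), Real.exp_pos a]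

lemma fou_integrable_g {H : ℝ} (hH : 0 < H) :
    Integrable (fun v : ℝ => Real.exp (-|v|) * |v| ^ (2 * H)) := by
  have int_Ioi : IntegrableOn (fun v : ℝ => Real.exp (-|v|) * |v| ^ (2 * H)) (Set.Ioi 0) := by
    have h0 := Real.GammaIntegral_convergent (s := 2 * H + 1) (by linarith)
    have h1 : IntegrableOn (fun x : ℝ => Real.exp (-x) * x ^ (2 * H)) (Set.Ioi 0) := by
      simpa using h0
    exact h1.congr_fun (fun v hv => by
      rw [abs_of_pos (Set.mem_Ioi.1 hv)]) measurableSet_Ioi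
  have int_Iic : IntegrableOn (fun v : ℝ => Real.exp (-|v|) * |v| ^ (2 * H)) (Set.Iic 0) := by
    rw [← Measure.map_neg_eq_self (volume : Measure ℝ)]
    have m : MeasurableEmbedding fun x : ℝ => -x := (Homeomorph.neg ℝ).measurableEmbedding
    rw [m.integrableOn_map_iff]
    simp_rw [Function.comp_def, abs_neg, Set.neg_preimage, Set.neg_Iic, neg_zero]
    exact Iff.mpr integrableOn_Ici_iff_integrableOn_Ioi int_Ioi
  have := int_Iic.union int_Ioi
  rwa [Set.Iic_union_Ioi, integrableOn_univ] at this

lemma fou_integral_g {H : ℝ} (hH : 0 < H) :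
    ∫ v : ℝ, Real.exp (-|v|) * |v| ^ (2 * H) = 2 * Real.Gamma (2 * H + 1) := by
  rw [integral_comp_abs (f := fun x : ℝ => Real.exp (-x) * x ^ (2 * H)),
    Real.Gamma_eq_integral (by linarith : (0:ℝ) < 2 * H + 1)]
  norm_num

lemma fou_integrable_h {H : ℝ} (hH : 0 < H) (s : ℝ) :
    Integrable (fun v : ℝ => Real.exp (-|v - s|) * |v| ^ (2 * H)) := by
  have hg := fou_integrable_g hH
  refine Integrable.mono' (hg.const_mul (Real.exp |s|)) ?_ ?_
  · have c1 : Continuous fun v : ℝ => Real.exp (-|v - s|) := by continuity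
    have c2 : Continuous fun v : ℝ => |v| ^ (2 * H) :=
      continuous_abs.rpow_const (fun x => Or.inr (by linarith))
    exact (c1.mul c2).aestronglyMeasurable
  · filter_upwards with v
    rw [Real.norm_eq_abs, abs_of_nonneg (by positivity)]
    have h1 : Real.exp (-|v - s|) ≤ Real.exp |s| * Real.exp (-|v|) := by
      rw [← Real.exp_add]
      apply Real.exp_le_exp.2
      have := abs_sub_abs_le_abs_sub v (v - s)
      simp only [sub_sub_cancel] at this
      linarith
    have h2 : (0:ℝ) ≤ |v| ^ (2 * H) := Real.rpow_nonneg (abs_nonneg v) _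
    calc Real.exp (-|v - s|) * |v| ^ (2 * H)
        ≤ (Real.exp |s| * Real.exp (-|v|)) * |v| ^ (2 * H) :=
          mul_le_mul_of_nonneg_right h1 h2
      _ = Real.exp |s| * (Real.exp (-|v|) * |v| ^ (2 * H)) := by ring

lemma fou_shift_eq {H : ℝ} (s : ℝ) :
    ∫ v : ℝ, Real.exp (-|v|) * |s + v| ^ (2 * H)
      = ∫ v : ℝ, Real.exp (-|v - s|) * |v| ^ (2 * H) := by
  rw [← integral_add_right_eq_self (fun v : ℝ => Real.exp (-|v - s|) * |v| ^ (2 * H)) s]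
  congr 1
  ext v
  rw [add_sub_cancel_right, add_comm s v]

lemma fou_diff_bound {H : ℝ} (hH : 0 < H) {s : ℝ} (hs : 0 < s) :
    |(∫ v : ℝ, Real.exp (-|v|) * |s + v| ^ (2 * H))
        - ∫ v : ℝ, Real.exp (-|v|) * |v| ^ (2 * H)|
      ≤ s * Real.exp s * (2 * Real.Gamma (2 * H + 1)) := by
  rw [fou_shift_eq,
    ← integral_sub (fou_integrable_h hH s) (fou_integrable_g hH)]
  have hint : Integrable (fun v : ℝ => s * Real.exp s * (Real.exp (-|v|) * |v| ^ (2 * H))) :=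
    (fou_integrable_g hH).const_mul _
  have hb : ∀ v : ℝ, |Real.exp (-|v - s|) * |v| ^ (2 * H) - Real.exp (-|v|) * |v| ^ (2 * H)|
      ≤ s * Real.exp s * (Real.exp (-|v|) * |v| ^ (2 * H)) := by
    intro v
    have h2 : (0:ℝ) ≤ |v| ^ (2 * H) := Real.rpow_nonneg (abs_nonneg v) _
    have key : |Real.exp (-|v - s|) - Real.exp (-|v|)| ≤ s * Real.exp s * Real.exp (-|v|) := by
      have h3 := fou_abs_exp_sub_exp_le (-|v - s|) (-|v|)
      have h4 : |(-|v - s|) - (-|v|)| ≤ s := by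
        have h := abs_abs_sub_abs_le_abs_sub v (v - s)
        have e : (-|v - s|) - (-|v|) = |v| - |v - s| := by ring
        rw [e]
        simpa [sub_sub_cancel, abs_of_pos hs] using h
      have h5 : max (-|v - s|) (-|v|) ≤ s - |v| := by
        apply max_le
        · have h7 := abs_sub_abs_le_abs_sub v (v - s)
          simp only [sub_sub_cancel] at h7
          have h8 : |s| = s := abs_of_pos hs
          linarith [le_abs_self s]
        · linarith
      have h6 : Real.exp (max (-|v - s|) (-|v|)) ≤ Real.exp s * Real.exp (-|v|) := by
        rw [← Real.exp_add]
        exact Real.exp_le_exp.2 (by linarith)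
      have h9 := mul_le_mul h4 h6 (Real.exp_nonneg _) (le_of_lt hs)
      nlinarith [h3, h9]
    have e2 : Real.exp (-|v - s|) * |v| ^ (2 * H) - Real.exp (-|v|) * |v| ^ (2 * H)
        = (Real.exp (-|v - s|) - Real.exp (-|v|)) * |v| ^ (2 * H) := by ring
    rw [e2, abs_mul, abs_of_nonneg h2]
    nlinarith [mul_le_mul_of_nonneg_right key h2]
  have hnorm := norm_integral_le_of_norm_le (f := fun v : ℝ =>
      Real.exp (-|v - s|) * |v| ^ (2 * H) - Real.exp (-|v|) * |v| ^ (2 * H))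
    hint (Filter.Eventually.of_forall (fun v => by rw [Real.norm_eq_abs]; exact hb v))
  rw [Real.norm_eq_abs, integral_const_mul, fou_integral_g hH] at hnorm
  exact hnorm

/-- for `H ∈ (0,1/2)`, the fOU correlation function satisfies the small-lag
expansion `C_Z(s) = 1 - s^{2H}/Γ(2H+1) + o(s^{2H})` as `s → 0⁺`. -/
theorem fou_correlation_small_lag (H : ℝ) (hH : H ∈ Set.Ioo (0 : ℝ) (1/2)) :
    (fun s : ℝ => fouCorr H s - (1 - s ^ (2 * H) / Real.Gamma (2 * H + 1)))
      =o[nhdsWithin (0 : ℝ) (Set.Ioi 0)] fun s : ℝ => s ^ (2 * H) := by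
  obtain ⟨hH0, hH1⟩ := hH
  have hΓpos : 0 < Real.Gamma (2 * H + 1) := Real.Gamma_pos_of_pos (by linarith)
  have key : ∀ s : ℝ, fouCorr H s - (1 - s ^ (2 * H) / Real.Gamma (2 * H + 1)) =
      (Real.Gamma (2 * H + 1))⁻¹ * (1 / 2) *
        ((∫ v : ℝ, Real.exp (-|v|) * |s + v| ^ (2 * H)) - 2 * Real.Gamma (2 * H + 1)) := by
    intro s
    unfold fouCorr
    field_simp
    ring
  have hO : (fun s : ℝ => fouCorr H s - (1 - s ^ (2 * H) / Real.Gamma (2 * H + 1)))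
      =O[nhdsWithin (0 : ℝ) (Set.Ioi 0)] (fun s : ℝ => s) := by
    apply IsBigO.of_bound (Real.exp 1)
    filter_upwards [Ioo_mem_nhdsGT_of_mem
      (by norm_num : (0:ℝ) ∈ Set.Ico (0:ℝ) 1)] with s hs
    obtain ⟨hs0, hs1⟩ := hs
    rw [key s, Real.norm_eq_abs, Real.norm_eq_abs, abs_mul]
    have hb : |(∫ v : ℝ, Real.exp (-|v|) * |s + v| ^ (2 * H))
        - 2 * Real.Gamma (2 * H + 1)| ≤ s * Real.exp s * (2 * Real.Gamma (2 * H + 1)) := by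
      have := fou_diff_bound hH0 hs0
      rwa [fou_integral_g hH0] at this
    have habs : |(Real.Gamma (2 * H + 1))⁻¹ * (1 / 2)|
        = (Real.Gamma (2 * H + 1))⁻¹ * (1 / 2) := abs_of_pos (by positivity)
    rw [habs]
    have hexp : Real.exp s ≤ Real.exp 1 := Real.exp_le_exp.2 (le_of_lt hs1)
    calc (Real.Gamma (2 * H + 1))⁻¹ * (1 / 2) *
          |(∫ v : ℝ, Real.exp (-|v|) * |s + v| ^ (2 * H)) - 2 * Real.Gamma (2 * H + 1)|
        ≤ (Real.Gamma (2 * H + 1))⁻¹ * (1 / 2) *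
          (s * Real.exp s * (2 * Real.Gamma (2 * H + 1))) := by
          apply mul_le_mul_of_nonneg_left hb (by positivity)
      _ = s * Real.exp s := by field_simp
      _ ≤ Real.exp 1 * |s| := by
          rw [abs_of_pos hs0]
          nlinarith [Real.exp_pos s]
  have ho : (fun s : ℝ => s) =o[nhdsWithin (0 : ℝ) (Set.Ioi 0)]
      (fun s : ℝ => s ^ (2 * H)) := by
    rw [isLittleO_iff_tendsto' ?_]
    · have hc : Tendsto (fun s : ℝ => s ^ (1 - 2 * H)) (nhdsWithin (0 : ℝ) (Set.Ioi 0))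
          (nhds 0) := by
        have h1 := (Real.continuousAt_rpow_const 0 (1 - 2 * H) (Or.inr (by linarith))).tendsto
        rw [Real.zero_rpow (by linarith : 1 - 2 * H ≠ 0)] at h1
        exact h1.mono_left nhdsWithin_le_nhds
      apply hc.congr'
      filter_upwards [self_mem_nhdsWithin] with s hs
      have hs0 : (0:ℝ) < s := hs
      rw [Real.rpow_sub hs0, Real.rpow_one]
    · filter_upwards [self_mem_nhdsWithin] with s hs h
      exact absurd h (ne_of_gt (Real.rpow_pos_of_pos hs _))
  exact hO.trans_isLittleO ho
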